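/- Let X = U = Y = [0,1], c(x,u) = (x−u)², P = ½δ_{1/2} + ½δ_1, P_n = ½δ_{1/2 − 1/n} + ½δ_1, and let Q be the quantizer kernel Q(0|x) = 1_{x ∈ [0,1/2)}, Q(1|x) = 1_{x ∈ [1/2,1]} with output space {0,1}. Then P_n → P weakly, J*(P_n,Q) = 0 for all n ≥ 3, and J*(P,Q) = 1/16. Hence the optimal cost is discontinuous in the prior under weak convergence for quantizer channels. -/

import Mathlib

open MeasureTheory ProbabilityTheory Filter
open scoped ENNReal

namespace Stmt8

/-- The quantizer map: `q(x) = 0` if `x ∈ [0,1/2)` (i.e. `x < 1/2`) and `q(x) = 1` if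
`x ∈ [1/2,1]`. -/
noncomputable def q (x : ℝ) : ℝ := if x < 1/2 then 0 else 1

lemma q_measurable : Measurable q :=
  Measurable.ite (measurableSet_lt measurable_id measurable_const)
    measurable_const measurable_const

/-- The quantizer channel `Q(·|x) = δ_{q(x)}`. -/
noncomputable def Q : Kernel ℝ ℝ := Kernel.deterministic q q_measurable

/-- The expected cost `J(P,Q,γ) = E[(X − γ(Y))²]`. -/
noncomputable def J (P : Measure ℝ) (γ : ℝ → ℝ) : ℝ :=
  ∫ p : ℝ × ℝ, (p.1 - γ p.2) ^ 2 ∂(P ⊗ₘ Q)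

/-- Admissible policies: measurable maps with values in `U = [0,1]`. -/
def Pol : Type := {γ : ℝ → ℝ // Measurable γ ∧ ∀ y, γ y ∈ Set.Icc (0:ℝ) 1}

/-- The optimal cost `J*(P,Q)`. -/
noncomputable def Jstar (P : Measure ℝ) : ℝ := ⨅ γ : Pol, J P γ.1

/-- The prior `P = ½ δ_{1/2} + ½ δ_1`. -/
noncomputable def Plim : Measure ℝ :=
  (2:ℝ≥0∞)⁻¹ • Measure.dirac (1/2) + (2:ℝ≥0∞)⁻¹ • Measure.dirac 1

/-- The priors `P_n = ½ δ_{1/2 − 1/n} + ½ δ_1`. -/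
noncomputable def Pn (n : ℕ) : Measure ℝ :=
  (2:ℝ≥0∞)⁻¹ • Measure.dirac (1/2 - (n:ℝ)⁻¹) + (2:ℝ≥0∞)⁻¹ • Measure.dirac 1

instance : IsSFiniteKernel Q := by unfold Q; infer_instance

instance : Nonempty Pol := ⟨⟨fun _ => 0, measurable_const, fun _ => by norm_num⟩⟩

/-- Integrability with respect to a Dirac measure. -/
lemma integrable_dirac'' {α : Type*} [MeasurableSpace α] [MeasurableSingletonClass α]
    (f : α → ℝ) (a : α) : Integrable f (Measure.dirac a) :=
  (integrable_const (f a)).congr (ae_eq_dirac f).symm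

/-- Integral against `½ δ_a + ½ δ_b`. -/
lemma integral_half_dirac (a b : ℝ) (f : ℝ → ℝ) :
    ∫ x, f x ∂((2:ℝ≥0∞)⁻¹ • Measure.dirac a + (2:ℝ≥0∞)⁻¹ • Measure.dirac b)
      = (1/2) * f a + (1/2) * f b := by
  rw [integral_add_measure ((integrable_dirac'' f a).smul_measure (by simp))
      ((integrable_dirac'' f b).smul_measure (by simp)),
    integral_smul_measure, integral_smul_measure, integral_dirac, integral_dirac]
  norm_num

lemma dirac_compProd (a : ℝ) : Measure.dirac a ⊗ₘ Q = Measure.dirac (a, q a) := by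
  ext s hs
  rw [Measure.dirac_compProd_apply hs, Q, Kernel.deterministic_apply,
    Measure.dirac_apply' _ (measurable_prodMk_left hs), Measure.dirac_apply' _ hs]
  rfl

lemma J_eq (a b : ℝ) (γ : ℝ → ℝ) :
    J ((2:ℝ≥0∞)⁻¹ • Measure.dirac a + (2:ℝ≥0∞)⁻¹ • Measure.dirac b) γ
      = (1/2) * (a - γ (q a)) ^ 2 + (1/2) * (b - γ (q b)) ^ 2 := by
  rw [J, Measure.compProd_add_left, Measure.compProd_smul_left, Measure.compProd_smul_left,
    dirac_compProd, dirac_compProd,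
    integral_add_measure ((integrable_dirac'' _ _).smul_measure (by simp))
      ((integrable_dirac'' _ _).smul_measure (by simp)),
    integral_smul_measure, integral_smul_measure, integral_dirac, integral_dirac]
  norm_num

/-- `P_n → P` weakly, `J*(P_n,Q) = 0` for `n ≥ 3`, but `J*(P,Q) = 1/16`: the optimal cost
is discontinuous in the prior under weak convergence for quantizer channels. -/
theorem not_weakly_continuous_quantizer :
    (∀ f : BoundedContinuousFunction ℝ ℝ,
      Tendsto (fun n => ∫ x, f x ∂(Pn n)) atTop (nhds (∫ x, f x ∂Plim))) ∧
    (∀ n : ℕ, 3 ≤ n → Jstar (Pn n) = 0) ∧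
    Jstar Plim = 1 / 16 := by
  have hq1 : q 1 = 1 := by norm_num [q]
  have hqhalf : q (1/2) = 1 := by norm_num [q]
  refine ⟨?_, ?_, ?_⟩
  · intro f
    simp only [Pn, Plim, integral_half_dirac]
    have h1 : Tendsto (fun n : ℕ => (1/2 : ℝ) * f (1/2 - (n:ℝ)⁻¹)) atTop
        (nhds ((1/2) * f (1/2))) := by
      have : Tendsto (fun n : ℕ => (1/2 : ℝ) - (n:ℝ)⁻¹) atTop (nhds (1/2)) := by
        simpa using tendsto_const_nhds.sub (tendsto_inv_atTop_nhds_zero_nat (𝕜 := ℝ))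
      exact (tendsto_const_nhds.mul ((f.continuous.tendsto _).comp this))
    simpa using h1.add tendsto_const_nhds
  · intro n hn
    have ha : (0:ℝ) < (n:ℝ)⁻¹ := by positivity
    have ha2 : (n:ℝ)⁻¹ ≤ 1/2 := by
      rw [inv_le_comm₀ (by positivity) (by norm_num)]
      exact_mod_cast le_trans (by norm_num) (Nat.cast_le.mpr hn)
    obtain ⟨a, ha_def⟩ : ∃ a : ℝ, a = 1/2 - (n:ℝ)⁻¹ := ⟨_, rfl⟩
    have hqa : q a = 0 := by simp only [q, if_pos (by linarith : a < 1/2)]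
    have hJ : ∀ γ : ℝ → ℝ, J (Pn n) γ
        = (1/2) * (a - γ (q a)) ^ 2 + (1/2) * (1 - γ (q 1)) ^ 2 := by
      intro γ; rw [Pn, ← ha_def]; exact J_eq a 1 γ
    have hnonneg : ∀ γ : Pol, (0:ℝ) ≤ J (Pn n) γ.1 := by
      intro γ; rw [hJ]; positivity
    refine le_antisymm ?_ (le_ciInf hnonneg)
    have hpol : (fun y : ℝ => if y < 1/2 then a else 1) ∈
        {γ : ℝ → ℝ | Measurable γ ∧ ∀ y, γ y ∈ Set.Icc (0:ℝ) 1} := by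
      constructor
      · exact Measurable.ite (measurableSet_lt measurable_id measurable_const)
          measurable_const measurable_const
      · intro y
        simp only [Set.mem_Icc]
        split_ifs <;> constructor <;> subst ha_def <;> linarith
    have := ciInf_le ⟨(0:ℝ), by rintro x ⟨γ, rfl⟩; exact hnonneg γ⟩
      (⟨_, hpol⟩ : Pol)
    refine le_trans this (le_of_eq ?_)
    rw [hJ, hqa, hq1]
    norm_num
  · have hJ : ∀ γ : ℝ → ℝ, J Plim γ
        = (1/2) * (1/2 - γ 1) ^ 2 + (1/2) * (1 - γ 1) ^ 2 := by
      intro γ; rw [Plim, J_eq, hqhalf, hq1]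
    have hlb : ∀ γ : Pol, (1/16 : ℝ) ≤ J Plim γ.1 := by
      intro γ; rw [hJ]; nlinarith [sq_nonneg (γ.1 1 - 3/4)]
    refine le_antisymm ?_ (le_ciInf hlb)
    have hpol : (fun _ : ℝ => (3/4 : ℝ)) ∈
        {γ : ℝ → ℝ | Measurable γ ∧ ∀ y, γ y ∈ Set.Icc (0:ℝ) 1} :=
      ⟨measurable_const, fun _ => by norm_num⟩
    have := ciInf_le ⟨(1/16:ℝ), by rintro x ⟨γ, rfl⟩; exact hlb γ⟩ (⟨_, hpol⟩ : Pol)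
    refine le_trans this (le_of_eq ?_)
    rw [hJ]; norm_num
end Stmt8
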